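/- Let h be an integrable complex-valued function on [0,∞) and let φ : ℝ² → ℂ be continuous with compact support. Then lim_{ξ→0⁺} (1/ξ) ∫_0^∞ dt_1 ∫_0^{t_1} dt_2 φ(t_1,t_2) h((t_1 − t_2)/ξ) = (∫_0^∞ φ(t,t) dt) · (∫_0^∞ h(s) ds). -/

import Mathlib

set_option maxHeartbeats 1000000

open MeasureTheory Filter
open scoped Topology

/-- The basic scaling lemma of the low density limit: for `h` integrable on `[0,∞)`
and `φ` continuous with compact support,
`(1/ξ) ∫_0^∞ dt₁ ∫_0^{t₁} dt₂ φ(t₁,t₂) h((t₁−t₂)/ξ) → (∫_0^∞ φ(t,t) dt)(∫_0^∞ h(s) ds)`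
as `ξ → 0⁺`; i.e. `(1/ξ) h((t₁−t₂)/ξ)` converges on the simplex `t₁ ≥ t₂ ≥ 0` to
`δ₊(t₁−t₂) ∫_0^∞ h`. -/
theorem lowDensity_scaling_lemma
    (h : ℝ → ℂ) (hh : IntegrableOn h (Set.Ici (0 : ℝ)))
    (φ : ℝ × ℝ → ℂ) (hφ : Continuous φ) (hφc : HasCompactSupport φ) :
    Tendsto
      (fun ξ : ℝ => (1 / ξ : ℂ) *
        ∫ t₁ in Set.Ioi (0 : ℝ), ∫ t₂ in (0 : ℝ)..t₁, φ (t₁, t₂) * h ((t₁ - t₂) / ξ))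
      (𝓝[>] 0)
      (𝓝 ((∫ t in Set.Ioi (0 : ℝ), φ (t, t)) * ∫ s in Set.Ioi (0 : ℝ), h s)) := by
  -- basic facts about h
  have hmeas : AEStronglyMeasurable h (volume.restrict (Set.Ioi (0:ℝ))) :=
    hh.aestronglyMeasurable.mono_measure
      (Measure.restrict_mono Set.Ioi_subset_Ici_self le_rfl)
  have hhInt : IntegrableOn h (Set.Ioi (0:ℝ)) := hh.mono_set Set.Ioi_subset_Ici_self
  -- bound for φ
  obtain ⟨C, hC⟩ : ∃ C, ∀ p, ‖φ p‖ ≤ C := hφc.exists_bound_of_continuous hφ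
  -- radius for the support of φ
  obtain ⟨R, hR⟩ : ∃ R, tsupport φ ⊆ Metric.closedBall 0 R :=
    hφc.isBounded.subset_closedBall 0
  have hφzero : ∀ t₁ : ℝ, t₁ ∉ Set.Icc (-R) R → ∀ y : ℝ, φ (t₁, y) = 0 := by
    intro t₁ ht y
    apply image_eq_zero_of_notMem_tsupport
    intro hmem
    have := hR hmem
    rw [Metric.mem_closedBall, dist_zero_right] at this
    have h1 : |t₁| ≤ R := le_trans (by simpa using (norm_fst_le ((t₁, y) : ℝ × ℝ))) this
    exact ht (abs_le.1 h1)
  -- the rescaled integrand after change of variables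
  set g : ℝ → ℝ → ℝ → ℂ :=
    fun ξ t₁ s => ({s : ℝ | ξ * s ≤ t₁}).indicator (fun s => φ (t₁, t₁ - ξ * s) * h s) s with hg
  set I : ℂ := ∫ s in Set.Ioi (0:ℝ), h s with hI
  -- the dominating bound for the inner integrals
  have hbnd : ∀ ξ t₁ s, ‖g ξ t₁ s‖ ≤ C * ‖h s‖ := by
    intro ξ t₁ s
    refine le_trans (norm_indicator_le_norm_self _ _) ?_
    rw [norm_mul]
    exact mul_le_mul_of_nonneg_right (hC _) (norm_nonneg _)
  have hCIbnd : Integrable (fun s => C * ‖h s‖) (volume.restrict (Set.Ioi (0:ℝ))) :=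
    hhInt.norm.const_mul C
  -- inner measurability for fixed ξ, t₁
  have hgmeas : ∀ ξ t₁ : ℝ, AEStronglyMeasurable (g ξ t₁) (volume.restrict (Set.Ioi (0:ℝ))) := by
    intro ξ t₁
    refine AEStronglyMeasurable.indicator ?_ ?_
    · have hc : Continuous fun s : ℝ => ((t₁, t₁ - ξ * s) : ℝ × ℝ) :=
        continuous_const.prodMk (continuous_const.sub (continuous_const.mul continuous_id))
      exact ((hφ.comp hc).aestronglyMeasurable).mul hmeas
    · exact measurableSet_le (measurable_const.mul measurable_id) measurable_const
  -- Step 1: identify the function with the substituted form, for ξ > 0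
  have heq : ∀ᶠ ξ : ℝ in 𝓝[>] (0:ℝ),
      ((1 / ξ : ℂ) *
        ∫ t₁ in Set.Ioi (0 : ℝ), ∫ t₂ in (0 : ℝ)..t₁, φ (t₁, t₂) * h ((t₁ - t₂) / ξ))
      = ∫ t₁ in Set.Ioi (0:ℝ), ∫ s in Set.Ioi (0:ℝ), g ξ t₁ s := by
    filter_upwards [self_mem_nhdsWithin] with ξ (hξ : 0 < ξ)
    rw [← MeasureTheory.integral_const_mul]
    refine setIntegral_congr_fun measurableSet_Ioi ?_
    intro t₁ ht₁
    dsimp only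
    have key1 : (∫ t₂ in (0:ℝ)..t₁, φ (t₁, t₂) * h ((t₁ - t₂) / ξ))
        = ∫ u in (0:ℝ)..t₁, φ (t₁, t₁ - u) * h (u / ξ) := by
      have := intervalIntegral.integral_comp_sub_left
        (a := (0:ℝ)) (b := t₁) (fun u => φ (t₁, t₁ - u) * h (u / ξ)) t₁
      simpa using this
    have key2 : (∫ u in (0:ℝ)..t₁, φ (t₁, t₁ - u) * h (u / ξ))
        = ξ • ∫ s in (0:ℝ)..(t₁/ξ), φ (t₁, t₁ - ξ * s) * h s := by
      have := intervalIntegral.integral_comp_div (a := (0:ℝ)) (b := t₁)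
        (fun s => φ (t₁, t₁ - ξ * s) * h s) (ne_of_gt hξ)
      rw [zero_div] at this
      rw [← this]
      refine intervalIntegral.integral_congr fun u _ => ?_
      show φ (t₁, t₁ - u) * h (u / ξ) = φ (t₁, t₁ - ξ * (u / ξ)) * h (u / ξ)
      rw [show ξ * (u / ξ) = u from by field_simp]
    have key3 : (∫ s in (0:ℝ)..(t₁/ξ), φ (t₁, t₁ - ξ * s) * h s)
        = ∫ s in Set.Ioi (0:ℝ), g ξ t₁ s := by
      have h0 : (0:ℝ) ≤ t₁ / ξ := le_of_lt (div_pos ht₁ hξ)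
      rw [intervalIntegral.integral_of_le h0]
      have hsets : {s : ℝ | ξ * s ≤ t₁} = Set.Iic (t₁ / ξ) := by
        ext s
        simp [Set.mem_Iic, le_div_iff₀ hξ, mul_comm]
      rw [hg]
      simp only [hsets]
      rw [setIntegral_indicator measurableSet_Iic, Set.Ioi_inter_Iic]
    rw [key1, key2, key3, Complex.real_smul, ← mul_assoc]
    rw [one_div, inv_mul_cancel₀ (by exact_mod_cast ne_of_gt hξ), one_mul]
  refine Tendsto.congr' (Filter.EventuallyEq.symm heq) ?_
  -- Step 2: rewrite the limit
  have hlim_eq : ((∫ t in Set.Ioi (0 : ℝ), φ (t, t)) * I)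
      = ∫ t₁ in Set.Ioi (0:ℝ), φ (t₁, t₁) * I := (integral_mul_const _ _).symm
  rw [hlim_eq]
  -- Step 3: dominated convergence for the outer integral
  refine tendsto_integral_filter_of_dominated_convergence
    (fun t₁ => (Set.Icc (-R) R).indicator (fun _ => C * ∫ s in Set.Ioi (0:ℝ), ‖h s‖) t₁)
    ?_ ?_ ?_ ?_
  · -- measurability of the outer integrand
    filter_upwards [self_mem_nhdsWithin] with ξ (hξ : 0 < ξ)
    have : AEStronglyMeasurable (fun p : ℝ × ℝ => g ξ p.1 p.2)
        ((volume.restrict (Set.Ioi (0:ℝ))).prod (volume.restrict (Set.Ioi (0:ℝ)))) := by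
      have hset : MeasurableSet {p : ℝ × ℝ | ξ * p.2 ≤ p.1} :=
        measurableSet_le (measurable_const.mul measurable_snd) measurable_fst
      have hfun : AEStronglyMeasurable (fun p : ℝ × ℝ => φ (p.1, p.1 - ξ * p.2) * h p.2)
          ((volume.restrict (Set.Ioi (0:ℝ))).prod (volume.restrict (Set.Ioi (0:ℝ)))) :=
        ((hφ.comp (continuous_fst.prodMk (continuous_fst.sub
          (continuous_const.mul continuous_snd)))).aestronglyMeasurable).mul hmeas.comp_snd
      have := hfun.indicator hset
      refine this.congr (Filter.Eventually.of_forall fun p => ?_)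
      by_cases hp : ξ * p.2 ≤ p.1 <;>
        simp [hg, Set.indicator, hp]
    exact this.integral_prod_right'
  · -- uniform bound
    filter_upwards [self_mem_nhdsWithin] with ξ (hξ : 0 < ξ)
    refine Filter.Eventually.of_forall fun t₁ => ?_
    by_cases ht : t₁ ∈ Set.Icc (-R) R
    · rw [Set.indicator_of_mem ht]
      refine le_trans
        (norm_integral_le_of_norm_le hCIbnd (Filter.Eventually.of_forall fun s => hbnd ξ t₁ s))
        (le_of_eq (MeasureTheory.integral_const_mul C _))
    · rw [Set.indicator_of_notMem ht]
      have : ∀ s, g ξ t₁ s = 0 := by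
        intro s
        rw [hg]
        simp only [hφzero t₁ ht, zero_mul, Set.indicator_zero']
        simp [hφzero t₁ ht]
      simp [this]
  · -- integrability of the bound
    exact (((integrableOn_const_iff (C := C * ∫ s in Set.Ioi (0:ℝ), ‖h s‖)).2
      (Or.inr measure_Icc_lt_top)).integrable_indicator measurableSet_Icc).restrict
  · -- pointwise convergence of the inner integrals
    rw [ae_restrict_iff' measurableSet_Ioi]
    refine Filter.Eventually.of_forall fun t₁ ht₁ => ?_
    have hinner : (φ (t₁, t₁) * I) = ∫ s in Set.Ioi (0:ℝ), φ (t₁, t₁) * h s :=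
      (MeasureTheory.integral_const_mul _ _).symm
    rw [hinner]
    refine tendsto_integral_filter_of_dominated_convergence (fun s => C * ‖h s‖)
      ?_ ?_ hCIbnd ?_
    · exact Filter.Eventually.of_forall fun ξ => hgmeas ξ t₁
    · exact Filter.Eventually.of_forall fun ξ =>
        Filter.Eventually.of_forall fun s => hbnd ξ t₁ s
    · rw [ae_restrict_iff' measurableSet_Ioi]
      refine Filter.Eventually.of_forall fun s hs => ?_
      have hts : (0:ℝ) < t₁ / s := div_pos ht₁ hs
      have hev : ∀ᶠ ξ in 𝓝[>] (0:ℝ), g ξ t₁ s = φ (t₁, t₁ - ξ * s) * h s := by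
        filter_upwards [Ioo_mem_nhdsGT_of_mem (by exact ⟨le_rfl, hts⟩ : (0:ℝ) ∈ Set.Ico 0 (t₁/s))]
          with ξ hξ
        have : ξ * s ≤ t₁ := le_of_lt ((lt_div_iff₀ hs).1 hξ.2)
        simp only [hg]
        exact Set.indicator_of_mem (show s ∈ {s : ℝ | ξ * s ≤ t₁} from this) _
      refine Tendsto.congr' (Filter.EventuallyEq.symm hev) ?_
      have hc : Tendsto (fun ξ : ℝ => φ (t₁, t₁ - ξ * s)) (𝓝[>] (0:ℝ)) (𝓝 (φ (t₁, t₁))) := by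
        have hcont : Tendsto (fun ξ : ℝ => ((t₁, t₁ - ξ * s) : ℝ × ℝ)) (𝓝 (0:ℝ))
            (𝓝 ((t₁, t₁) : ℝ × ℝ)) := by
          have hcc : Continuous fun ξ : ℝ => ((t₁, t₁ - ξ * s) : ℝ × ℝ) :=
            continuous_const.prodMk (continuous_const.sub (continuous_id.mul continuous_const))
          have := hcc.tendsto 0
          simpa using this
        exact ((hφ.tendsto _).comp hcont).mono_left nhdsWithin_le_nhds
      exact hc.mul tendsto_const_nhds
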